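/- Let Ũ^ı be the algebra presented by generators B_i and invertible k̃_i (i∈I) with relations: k̃_ik̃_ℓ = k̃_ℓk̃_i; k̃_ℓB_i = v^{c_{τℓ,i}−c_{ℓ,i}}B_ik̃_ℓ; B_iB_j = B_jB_i if c_{ij}=0 and τi≠j; B_i²B_j − (v+v^{-1})B_iB_jB_i + B_jB_i² = 0 if c_{ij}=−1 and j ≠ τi ≠ i; B_{τi}B_i − B_iB_{τi} = (k̃_i − k̃_{τi})/(v−v^{-1}) if τi≠i; and B_i²B_j − (v+v^{-1})B_iB_jB_i + B_jB_i² = v k̃_i B_j if c_{ij}=−1 and τi=i. Then there exists a ℚ-algebra automorphism ψ_ı of Ũ^ı with ψ_ı(v)=v^{-1}, ψ_ı(B_i)=B_i for all i, ψ_ı(k̃_i)=k̃_{τi} if τi≠i, and ψ_ı(k̃_i)=v²k̃_i if τi=i. -/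

import Mathlib

noncomputable section

/-- The base field `ℚ(v)`. -/
abbrev kk : Type := RatFunc ℚ

/-- The indeterminate `v`. -/
noncomputable def v : kk := RatFunc.X

/-- Generators of the universal `ı`quantum group `Ũ^ı`. -/
inductive GenI (I : Type) : Type
  | B : I → GenI I
  | k : I → GenI I
  | ki : I → GenI I

variable {I : Type} [Fintype I] [DecidableEq I]

noncomputable def gi (x : GenI I) : FreeAlgebra kk (GenI I) := FreeAlgebra.ι kk x

/-- Defining relations of the universal `ı`quantum group `Ũ^ı` attached to the symmetric
GCM `c` of type ADE with involution `τ`. -/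
inductive RelI (c : I → I → ℤ) (τ : I → I) :
    FreeAlgebra kk (GenI I) → FreeAlgebra kk (GenI I) → Prop
  | kki (i : I) : RelI c τ (gi (GenI.k i) * gi (GenI.ki i)) 1
  | kik (i : I) : RelI c τ (gi (GenI.ki i) * gi (GenI.k i)) 1
  | kcomm (i j : I) : RelI c τ (gi (GenI.k i) * gi (GenI.k j)) (gi (GenI.k j) * gi (GenI.k i))
  | kB (l i : I) : RelI c τ (gi (GenI.k l) * gi (GenI.B i))
      ((v ^ (c (τ l) i - c l i)) • (gi (GenI.B i) * gi (GenI.k l)))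
  | BB (i j : I) (h1 : c i j = 0) (h2 : τ i ≠ j) :
      RelI c τ (gi (GenI.B i) * gi (GenI.B j)) (gi (GenI.B j) * gi (GenI.B i))
  | serre (i j : I) (h1 : c i j = -1) (h2 : j ≠ τ i) (h3 : τ i ≠ i) :
      RelI c τ (gi (GenI.B i) * gi (GenI.B i) * gi (GenI.B j)
        - (v + v⁻¹) • (gi (GenI.B i) * gi (GenI.B j) * gi (GenI.B i))
        + gi (GenI.B j) * (gi (GenI.B i) * gi (GenI.B i))) 0
  | pair (i : I) (hne : τ i ≠ i) :
      RelI c τ (gi (GenI.B (τ i)) * gi (GenI.B i) - gi (GenI.B i) * gi (GenI.B (τ i)))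
        (((v - v⁻¹)⁻¹) • (gi (GenI.k i) - gi (GenI.k (τ i))))
  | serreSplit (i j : I) (h1 : c i j = -1) (h2 : τ i = i) :
      RelI c τ (gi (GenI.B i) * gi (GenI.B i) * gi (GenI.B j)
        - (v + v⁻¹) • (gi (GenI.B i) * gi (GenI.B j) * gi (GenI.B i))
        + gi (GenI.B j) * (gi (GenI.B i) * gi (GenI.B i)))
        (v • (gi (GenI.k i) * gi (GenI.B j)))

/-- The universal `ı`quantum group `Ũ^ı`, presented by generators and relations. -/
abbrev UiAlg (c : I → I → ℤ) (τ : I → I) : Type := RingQuot (RelI c τ)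

noncomputable def UB (c : I → I → ℤ) (τ : I → I) (i : I) : UiAlg c τ :=
  RingQuot.mkAlgHom kk (RelI c τ) (gi (GenI.B i))
noncomputable def Uk (c : I → I → ℤ) (τ : I → I) (i : I) : UiAlg c τ :=
  RingQuot.mkAlgHom kk (RelI c τ) (gi (GenI.k i))
noncomputable def Uki (c : I → I → ℤ) (τ : I → I) (i : I) : UiAlg c τ :=
  RingQuot.mkAlgHom kk (RelI c τ) (gi (GenI.ki i))


set_option linter.unusedSectionVars false
set_option linter.unusedVariables false

namespace BarAux

lemma v_ne : (v : kk) ≠ 0 := RatFunc.X_ne_zero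

lemma trans_v : Transcendental ℚ (v : kk) := by
  have h := (transcendental_algebraMap_iff (R := ℚ) (A := kk)
    (a := (Polynomial.X : Polynomial ℚ)) (RatFunc.algebraMap_injective ℚ)).mpr
    (Polynomial.transcendental_X ℚ)
  simpa [RatFunc.algebraMap_X, v] using h

lemma trans_vinv : Transcendental ℚ ((v : kk)⁻¹) :=
  fun h => trans_v (IsAlgebraic.inv_iff.mp h)

noncomputable def bbar : kk →ₐ[ℚ] kk :=
  (RatFunc.liftRingHom (Polynomial.aeval ((v : kk)⁻¹)).toRingHom
    (nonZeroDivisors_le_comap_nonZeroDivisors_of_injective _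
      (transcendental_iff_injective.mp trans_vinv))).toRatAlgHom

lemma bbar_algebraMap (p : Polynomial ℚ) :
    bbar (algebraMap (Polynomial ℚ) kk p) = Polynomial.aeval ((v : kk)⁻¹) p := by
  have h := RatFunc.liftRingHom_apply_div (Polynomial.aeval ((v : kk)⁻¹)).toRingHom
    (nonZeroDivisors_le_comap_nonZeroDivisors_of_injective _
      (transcendental_iff_injective.mp trans_vinv)) p 1
  simpa [bbar, RingHom.toRatAlgHom_apply] using h

lemma bbar_v : bbar v = (v : kk)⁻¹ := by
  have h := bbar_algebraMap Polynomial.X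
  simpa [RatFunc.algebraMap_X, v] using h

lemma bbar_vinv : bbar ((v : kk)⁻¹) = v := by
  rw [map_inv₀, bbar_v, inv_inv]

lemma bbar_bbar (x : kk) : bbar (bbar x) = x := by
  have key : ∀ p : Polynomial ℚ, bbar (Polynomial.aeval ((v : kk)⁻¹) p)
      = algebraMap (Polynomial ℚ) kk p := by
    have : bbar.comp (Polynomial.aeval ((v : kk)⁻¹))
        = IsScalarTower.toAlgHom ℚ (Polynomial ℚ) kk := by
      apply Polynomial.algHom_ext
      simp only [AlgHom.coe_comp, Function.comp_apply, Polynomial.aeval_X,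
        IsScalarTower.coe_toAlgHom', RatFunc.algebraMap_X]
      rw [bbar_vinv]; rfl
    intro p
    exact AlgHom.congr_fun this p
  induction x using RatFunc.induction_on with
  | f p q hq =>
    rw [map_div₀, map_div₀, bbar_algebraMap, bbar_algebraMap, key, key]

end BarAux

namespace BarMain
open BarAux

variable {I : Type} [Fintype I] [DecidableEq I]
variable (c : I → I → ℤ) (τ : I → I)

/-- Type synonym of `Ũ^ı` carrying the `bar`-twisted `kk`-algebra structure. -/
def UiT (c : I → I → ℤ) (τ : I → I) : Type := UiAlg c τ

noncomputable instance : Ring (UiT c τ) := inferInstanceAs (Ring (UiAlg c τ))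
noncomputable instance : Algebra kk (UiT c τ) :=
  RingHom.toAlgebra' ((algebraMap kk (UiAlg c τ)).comp bbar.toRingHom)
    (fun a x => Algebra.commutes (A := UiAlg c τ) (bbar a) x)

lemma algT (a : kk) :
    (algebraMap kk (UiT c τ) a : UiAlg c τ) = algebraMap kk (UiAlg c τ) (bbar a) := rfl

/-- Images of the generators under the bar involution. -/
noncomputable def φfun : GenI I → UiT c τ := fun x =>
  match x with
  | GenI.B i => (UB c τ i : UiAlg c τ)
  | GenI.k i => ((if τ i = i then (v ^ 2 : kk) • Uk c τ i else Uk c τ (τ i)) : UiAlg c τ)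
  | GenI.ki i => ((if τ i = i then ((v : kk) ^ 2)⁻¹ • Uki c τ i else Uki c τ (τ i)) : UiAlg c τ)

noncomputable def Φ : FreeAlgebra kk (GenI I) →+* UiAlg c τ :=
  (FreeAlgebra.lift kk (φfun c τ)).toRingHom

lemma Φ_ι (x : GenI I) : Φ c τ (FreeAlgebra.ι kk x) = φfun c τ x :=
  FreeAlgebra.lift_ι_apply (A := UiT c τ) _ _

lemma Φ_gi (x : GenI I) : Φ c τ (gi x) = φfun c τ x := Φ_ι c τ x

lemma φfun_B (i : I) : φfun c τ (GenI.B i) = UB c τ i := rfl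

lemma mkB (i : I) : RingQuot.mkAlgHom kk (RelI c τ) (gi (GenI.B i)) = UB c τ i := rfl
lemma mkK (i : I) : RingQuot.mkAlgHom kk (RelI c τ) (gi (GenI.k i)) = Uk c τ i := rfl
lemma mkKi (i : I) : RingQuot.mkAlgHom kk (RelI c τ) (gi (GenI.ki i)) = Uki c τ i := rfl
lemma φfun_k (i : I) :
    φfun c τ (GenI.k i) = ((if τ i = i then (v ^ 2 : kk) • Uk c τ i else Uk c τ (τ i)) : UiAlg c τ) := rfl
lemma φfun_ki (i : I) :
    φfun c τ (GenI.ki i) = ((if τ i = i then ((v : kk) ^ 2)⁻¹ • Uki c τ i else Uki c τ (τ i)) : UiAlg c τ) := rfl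

lemma Φ_algebraMap (a : kk) :
    Φ c τ (algebraMap kk _ a) = algebraMap kk (UiAlg c τ) (bbar a) := by
  have h := (FreeAlgebra.lift kk (φfun c τ)).commutes a
  rw [← algT]
  exact h

lemma Φ_smul (a : kk) (x : FreeAlgebra kk (GenI I)) :
    Φ c τ (a • x) = bbar a • Φ c τ x := by
  rw [Algebra.smul_def, map_mul, Φ_algebraMap, ← Algebra.smul_def]

lemma bbar_zpow (e : ℤ) : bbar ((v : kk) ^ e) = (v : kk) ^ (-e) := by
  rw [map_zpow₀, bbar_v, inv_zpow, zpow_neg]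

lemma bbar_vv : bbar ((v : kk) + (v : kk)⁻¹) = (v : kk) + (v : kk)⁻¹ := by
  rw [map_add, bbar_v, bbar_vinv, add_comm]


lemma bbar_ratCast (a : ℚ) : bbar ((a : kk)) = (a : kk) := map_ratCast bbar.toRingHom a

lemma hrel (hτ : ∀ i, τ (τ i) = i) :
    ∀ ⦃x y⦄, RelI c τ x y → Φ c τ x = Φ c τ y := by
  intro x y h
  induction h with
  | kki i =>
    rw [map_mul, map_one, Φ_gi, Φ_gi, φfun_k, φfun_ki]
    have base : ∀ j : I, Uk c τ j * Uki c τ j = 1 := by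
      intro j
      have h := RingQuot.mkAlgHom_rel kk (RelI.kki (c := c) (τ := τ) j)
      rw [map_mul, map_one] at h
      exact h
    by_cases h : τ i = i
    · rw [if_pos h, if_pos h, smul_mul_smul_comm, mul_inv_cancel₀ (pow_ne_zero 2 v_ne),
        one_smul]
      exact base i
    · rw [if_neg h, if_neg h]
      exact base (τ i)
  | kik i =>
    rw [map_mul, map_one, Φ_gi, Φ_gi, φfun_k, φfun_ki]
    have base : ∀ j : I, Uki c τ j * Uk c τ j = 1 := by
      intro j
      have h := RingQuot.mkAlgHom_rel kk (RelI.kik (c := c) (τ := τ) j)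
      rw [map_mul, map_one] at h
      exact h
    by_cases h : τ i = i
    · rw [if_pos h, if_pos h, smul_mul_smul_comm, inv_mul_cancel₀ (pow_ne_zero 2 v_ne),
        one_smul]
      exact base i
    · rw [if_neg h, if_neg h]
      exact base (τ i)
  | kcomm i j =>
    have key : ∀ a b : I, Uk c τ a * Uk c τ b = Uk c τ b * Uk c τ a := by
      intro a b
      have h := RingQuot.mkAlgHom_rel kk (RelI.kcomm (c := c) (τ := τ) a b)
      rw [map_mul, map_mul] at h
      exact h
    rw [map_mul, map_mul, Φ_gi, Φ_gi, φfun_k, φfun_k]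
    by_cases h1 : τ i = i <;> by_cases h2 : τ j = j <;>
      simp only [if_pos, if_neg, h1, h2, if_true, if_false, smul_mul_assoc, mul_smul_comm] <;>
      first
        | rfl
        | (rw [key, smul_comm])
        | rw [key]
  | kB l i =>
    rw [map_mul, Φ_smul, map_mul, Φ_gi, Φ_gi, φfun_k, φfun_B, bbar_zpow]
    have key : ∀ m : I, Uk c τ m * UB c τ i
        = ((v : kk) ^ (c (τ m) i - c m i)) • (UB c τ i * Uk c τ m) := by
      intro m
      have h := RingQuot.mkAlgHom_rel kk (RelI.kB (c := c) (τ := τ) m i)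
      rw [map_mul, map_smul, map_mul] at h
      exact h
    by_cases h : τ l = l
    · rw [if_pos h]
      have e0 : c (τ l) i - c l i = 0 := by rw [h]; ring
      rw [e0, neg_zero, zpow_zero, one_smul, smul_mul_assoc, key l, e0, zpow_zero, one_smul,
        mul_smul_comm]
    · rw [if_neg h, key (τ l)]
      have e1 : c (τ (τ l)) i - c (τ l) i = -(c (τ l) i - c l i) := by rw [hτ l]; ring
      rw [e1]
  | BB i j h1 h2 =>
    rw [map_mul, map_mul, Φ_gi, Φ_gi, φfun_B, φfun_B]
    have h := RingQuot.mkAlgHom_rel kk (RelI.BB (c := c) (τ := τ) i j h1 h2)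
    rw [map_mul, map_mul] at h
    exact h
  | serre i j h1 h2 h3 =>
    rw [map_add, map_sub, map_mul, map_mul, map_mul, map_mul, Φ_smul, map_mul, map_mul,
      Φ_gi, Φ_gi, φfun_B, φfun_B, map_zero, bbar_vv]
    have h := RingQuot.mkAlgHom_rel kk (RelI.serre (c := c) (τ := τ) i j h1 h2 h3)
    rw [map_add, map_sub, map_mul, map_mul, map_mul, map_mul, map_smul, map_mul, map_mul,
      map_zero] at h
    exact h
  | pair i hne =>
    rw [map_sub, map_mul, map_mul, Φ_smul, map_sub, Φ_gi, Φ_gi, Φ_gi, Φ_gi,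
      φfun_B, φfun_B, φfun_k, φfun_k]
    have hne2 : τ (τ i) ≠ τ i := by rw [hτ i]; exact fun h => hne h.symm
    rw [if_neg hne, if_neg hne2, hτ i]
    have h := RingQuot.mkAlgHom_rel kk (RelI.pair (c := c) (τ := τ) i hne)
    rw [map_sub, map_mul, map_mul, map_smul, map_sub] at h
    simp only [mkB, mkK] at h
    rw [h]
    have hb : bbar (((v : kk) - (v : kk)⁻¹)⁻¹) = -(((v : kk) - (v : kk)⁻¹)⁻¹) := by
      rw [map_inv₀, map_sub, bbar_v, bbar_vinv, show ((v : kk)⁻¹ - v) = -(v - (v:kk)⁻¹) by ring,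
        inv_neg]
    rw [hb]
    simp only [neg_smul, smul_sub]
    abel
  | serreSplit i j h1 h2 =>
    rw [map_add, map_sub, map_mul, map_mul, map_mul, map_mul, Φ_smul, map_mul, map_mul,
      Φ_gi, Φ_gi, φfun_B, φfun_B, Φ_smul, map_mul, Φ_gi, Φ_gi, φfun_B, φfun_k, bbar_vv,
      bbar_v, if_pos h2]
    have h := RingQuot.mkAlgHom_rel kk (RelI.serreSplit (c := c) (τ := τ) i j h1 h2)
    rw [map_add, map_sub, map_mul, map_mul, map_mul, map_mul, map_smul, map_mul, map_mul,
      map_smul, map_mul] at h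
    simp only [mkB, mkK] at h
    rw [h, smul_mul_assoc, smul_smul, sq, ← mul_assoc, inv_mul_cancel₀ v_ne, one_mul]

lemma bbar_v2 : bbar ((v : kk) ^ 2) = ((v : kk) ^ 2)⁻¹ := by
  rw [map_pow, bbar_v, inv_pow]

lemma gi_eq (x : GenI I) : gi (I := I) x = FreeAlgebra.ι kk x := rfl

noncomputable def Ψ (hτ : ∀ i, τ (τ i) = i) : UiAlg c τ →+* UiAlg c τ :=
  RingQuot.lift ⟨Φ c τ, fun _ _ h => hrel c τ hτ h⟩

variable (hτ : ∀ i, τ (τ i) = i)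

lemma Ψ_mk (x : FreeAlgebra kk (GenI I)) :
    Ψ c τ hτ (RingQuot.mkAlgHom kk (RelI c τ) x) = Φ c τ x := by
  have h1 : RingQuot.mkAlgHom kk (RelI c τ) x = RingQuot.mkRingHom (RelI c τ) x := by
    rw [← RingQuot.mkAlgHom_coe kk (RelI c τ)]; rfl
  rw [h1]
  exact RingQuot.lift_mkRingHom_apply _ _ x

lemma Ψ_algebraMap (a : kk) :
    Ψ c τ hτ (algebraMap kk _ a) = algebraMap kk (UiAlg c τ) (bbar a) := by
  have h := (RingQuot.mkAlgHom kk (RelI c τ)).commutes a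
  rw [← h, Ψ_mk, Φ_algebraMap]

lemma Ψ_smul (a : kk) (x : UiAlg c τ) :
    Ψ c τ hτ (a • x) = bbar a • Ψ c τ hτ x := by
  rw [Algebra.smul_def, map_mul, Ψ_algebraMap, ← Algebra.smul_def]

lemma mk_eq (z : FreeAlgebra kk (GenI I)) :
    RingQuot.mkRingHom (RelI c τ) z = RingQuot.mkAlgHom kk (RelI c τ) z := by
  rw [← RingQuot.mkAlgHom_coe kk (RelI c τ)]; rfl

lemma Ψ_UB (i : I) : Ψ c τ hτ (UB c τ i) = UB c τ i := by
  conv_lhs => rw [← mkB]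
  rw [Ψ_mk, Φ_gi, φfun_B]

lemma Ψ_Uk (i : I) : Ψ c τ hτ (Uk c τ i)
    = if τ i = i then (v ^ 2 : kk) • Uk c τ i else Uk c τ (τ i) := by
  conv_lhs => rw [← mkK]
  rw [Ψ_mk, Φ_gi, φfun_k]

lemma Ψ_Uki (i : I) : Ψ c τ hτ (Uki c τ i)
    = if τ i = i then ((v : kk) ^ 2)⁻¹ • Uki c τ i else Uki c τ (τ i) := by
  conv_lhs => rw [← mkKi]
  rw [Ψ_mk, Φ_gi, φfun_ki]

lemma ΨΨ (x : UiAlg c τ) : Ψ c τ hτ (Ψ c τ hτ x) = x := by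
  obtain ⟨y, rfl⟩ := RingQuot.mkRingHom_surjective _ x
  rw [mk_eq]
  induction y using FreeAlgebra.induction with
  | grade0 a =>
    rw [AlgHom.commutes, Ψ_algebraMap, Ψ_algebraMap, bbar_bbar]
  | grade1 z =>
    rw [← gi_eq]
    cases z with
    | B i =>
      rw [mkB, Ψ_UB, Ψ_UB]
    | k i =>
      rw [mkK, Ψ_Uk]
      by_cases h : τ i = i
      · rw [if_pos h, Ψ_smul, Ψ_Uk, if_pos h, bbar_v2, smul_smul,
          inv_mul_cancel₀ (pow_ne_zero 2 v_ne), one_smul]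
      · have h2 : τ (τ i) ≠ τ i := by rw [hτ i]; exact fun hh => h hh.symm
        rw [if_neg h, Ψ_Uk, if_neg h2, hτ i]
    | ki i =>
      rw [mkKi, Ψ_Uki]
      by_cases h : τ i = i
      · rw [if_pos h, Ψ_smul, Ψ_Uki, if_pos h, map_inv₀, bbar_v2, inv_inv, smul_smul,
          mul_inv_cancel₀ (pow_ne_zero 2 v_ne), one_smul]
      · have h2 : τ (τ i) ≠ τ i := by rw [hτ i]; exact fun hh => h hh.symm
        rw [if_neg h, Ψ_Uki, if_neg h2, hτ i]
  | mul a b ha hb =>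
    simp only [map_mul]
    rw [ha, hb]
  | add a b ha hb =>
    simp only [map_add]
    rw [ha, hb]

end BarMain


/-- The bar involution `ψ_ı` of `Ũ^ı`: a `ℚ`-algebra automorphism with `ψ_ı(v) = v⁻¹`,
`ψ_ı(B_i) = B_i`, `ψ_ı(k̃_i) = k̃_{τi}` if `τi ≠ i`, and `ψ_ı(k̃_i) = v²k̃_i` if `τi = i`. -/
theorem bar_involution_exists (c : I → I → ℤ)
    (hsymm : ∀ i j, c i j = c j i) (hdiag : ∀ i, c i i = 2)
    (hoff : ∀ i j, i ≠ j → c i j = 0 ∨ c i j = -1)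
    (hposdef : ∀ x : I → ℤ, x ≠ 0 → 0 < ∑ i : I, ∑ j : I, x i * c i j * x j)
    (τ : I → I) (hτ : ∀ i, τ (τ i) = i) (hcτ : ∀ i j, c (τ i) (τ j) = c i j)
    (hsplit : ∀ i, τ i ≠ i → c i (τ i) = 0) :
    ∃ ψ : UiAlg c τ ≃+* UiAlg c τ,
      (∀ (a : ℚ) (x : UiAlg c τ), ψ ((a : kk) • x) = (a : kk) • ψ x) ∧
      ψ (algebraMap kk (UiAlg c τ) v) = algebraMap kk (UiAlg c τ) v⁻¹ ∧
      (∀ i, ψ (UB c τ i) = UB c τ i) ∧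
      (∀ i, τ i ≠ i → ψ (Uk c τ i) = Uk c τ (τ i)) ∧
      (∀ i, τ i = i → ψ (Uk c τ i) = (v ^ 2) • Uk c τ i) := by
  have compid : (BarMain.Ψ c τ hτ).comp (BarMain.Ψ c τ hτ) = RingHom.id (UiAlg c τ) :=
    RingHom.ext (BarMain.ΨΨ c τ hτ)
  refine ⟨RingEquiv.ofRingHom (BarMain.Ψ c τ hτ) (BarMain.Ψ c τ hτ) compid compid,
    ?_, ?_, ?_, ?_, ?_⟩
  · intro a x
    show BarMain.Ψ c τ hτ ((a : kk) • x) = (a : kk) • BarMain.Ψ c τ hτ x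
    rw [BarMain.Ψ_smul, BarMain.bbar_ratCast]
  · show BarMain.Ψ c τ hτ (algebraMap kk (UiAlg c τ) v) = _
    rw [BarMain.Ψ_algebraMap, BarAux.bbar_v]
  · intro i
    exact BarMain.Ψ_UB c τ hτ i
  · intro i hi
    show BarMain.Ψ c τ hτ (Uk c τ i) = _
    rw [BarMain.Ψ_Uk, if_neg hi]
  · intro i hi
    show BarMain.Ψ c τ hτ (Uk c τ i) = _
    rw [BarMain.Ψ_Uk, if_pos hi]
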